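/- Let F_q be a finite field, m ≥ 1, and ℓ_1, ..., ℓ_m ≥ 1 with ℓ := max_i ℓ_i < q−1. The toric code from the simplex P_{ℓ_1,...,ℓ_m} = conv{0, ℓ_1 e_1, ..., ℓ_m e_m}, obtained by evaluating the span of monomials x^e for lattice points e in this simplex at all points of (F_q^*)^m, has minimum distance exactly (q−1)^m − ℓ(q−1)^{m−1}. -/

import Mathlib

set_option maxHeartbeats 1000000

open MvPolynomial Finset

lemma sz_zero {F : Type*} [CommRing F] [Nontrivial F] (p : MvPolynomial (Fin 0) F) (hp : p ≠ 0)
    (x : Fin 0 → F) : eval x p ≠ 0 := by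
  have : p = C (eval x p) := by
    rw [MvPolynomial.eq_C_of_isEmpty p]
    simp
  intro h
  rw [h] at this
  simp only [map_zero] at this
  exact hp this

lemma roots_biUnion_card {F : Type*} [Field F] [Fintype F] [DecidableEq F] (S : Finset F) (n : ℕ)
    (qe : Polynomial (MvPolynomial (Fin n) F)) (d : ℕ) (hd : qe.natDegree ≤ d) :
    ((Fintype.piFinset fun _ : Fin n => S).biUnion
      (fun t => ((qe.map (eval t)).roots.toFinset).image (fun a => (Fin.cons a t : Fin (n+1) → F)))).card
      ≤ d * S.card ^ n := by
  calc ((Fintype.piFinset fun _ : Fin n => S).biUnion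
      (fun t => ((qe.map (eval t)).roots.toFinset).image (fun a => (Fin.cons a t : Fin (n+1) → F)))).card
      ≤ ∑ t ∈ (Fintype.piFinset fun _ : Fin n => S),
          (((qe.map (eval t)).roots.toFinset).image (fun a => (Fin.cons a t : Fin (n+1) → F))).card :=
        Finset.card_biUnion_le
    _ ≤ ∑ _t ∈ (Fintype.piFinset fun _ : Fin n => S), d := by
        apply Finset.sum_le_sum
        intro t _
        calc (((qe.map (eval t)).roots.toFinset).image (fun a => (Fin.cons a t : Fin (n+1) → F))).card
            ≤ ((qe.map (eval t)).roots.toFinset).card := Finset.card_image_le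
          _ ≤ Multiset.card (qe.map (eval t)).roots := Multiset.toFinset_card_le _
          _ ≤ (qe.map (eval t)).natDegree := Polynomial.card_roots' _
          _ ≤ d := le_trans Polynomial.natDegree_map_le hd
    _ = S.card ^ n * d := by rw [Finset.sum_const, smul_eq_mul, Fintype.card_piFinset]; simp
    _ = d * S.card ^ n := Nat.mul_comm _ _


lemma sz {F : Type*} [Field F] [Fintype F] [DecidableEq F] (S : Finset F) :
    ∀ (n : ℕ) (p : MvPolynomial (Fin n) F), p ≠ 0 →
    ((Fintype.piFinset fun _ : Fin n => S).filter
        fun x => MvPolynomial.eval x p = 0).card ≤ p.totalDegree * S.card ^ (n - 1) := by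
  intro n
  induction n with
  | zero =>
    intro p hp
    have : ((Fintype.piFinset fun _ : Fin 0 => S).filter
        fun x => MvPolynomial.eval x p = 0) = ∅ := by
      ext x
      simp [sz_zero p hp x]
    rw [this]
    simp
  | succ n ih =>
    intro p hp
    set qe := finSuccEquiv F n p with hqe
    have hqe0 : qe ≠ 0 := by
      simpa [hqe] using (map_ne_zero_iff _ (finSuccEquiv F n).injective).mpr hp
    set d := qe.natDegree with hd
    set g := qe.leadingCoeff with hg
    have hg0 : g ≠ 0 := Polynomial.leadingCoeff_ne_zero.mpr hqe0
    have hdeg : g.totalDegree + d ≤ p.totalDegree := by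
      have := totalDegree_coeff_finSuccEquiv_add_le p d (by
        rwa [Polynomial.coeff_natDegree])
      rwa [Polynomial.coeff_natDegree] at this
    -- evaluation formula
    have heval : ∀ x : Fin (n+1) → F,
        eval x p = Polynomial.eval (x 0) (Polynomial.map (eval (Fin.tail x)) qe) := by
      intro x
      conv_lhs => rw [← Fin.cons_self_tail x]
      rw [eval_eq_eval_mv_eval']
    set A := ((Fintype.piFinset fun _ : Fin (n+1) => S).filter
        fun x => MvPolynomial.eval x p = 0) with hA
    set A1 := A.filter (fun x => eval (Fin.tail x) g = 0) with hA1
    set A2 := A.filter (fun x => ¬ eval (Fin.tail x) g = 0) with hA2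
    have hsplit : A.card = A1.card + A2.card := (Finset.card_filter_add_card_filter_not _).symm
    set Zn := ((Fintype.piFinset fun _ : Fin n => S).filter fun t => eval t g = 0) with hZn
    have hZncard : Zn.card ≤ g.totalDegree * S.card ^ (n - 1) := ih g hg0
    -- A1 bound
    have hA1card : A1.card ≤ S.card * Zn.card := by
      have : A1.card ≤ (S ×ˢ Zn).card := by
        apply Finset.card_le_card_of_injOn (fun x => (x 0, Fin.tail x))
        · intro x hx
          simp only [hA1, hA, Finset.mem_coe, Finset.mem_filter, Fintype.mem_piFinset] at hx
          simp only [Finset.mem_coe, Finset.mem_product, hZn, Finset.mem_filter, Fintype.mem_piFinset]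
          exact ⟨hx.1.1 0, ⟨fun i => hx.1.1 i.succ, hx.2⟩⟩
        · intro x _ y _ hxy
          have h1 : x 0 = y 0 := congrArg Prod.fst hxy
          have h2 : Fin.tail x = Fin.tail y := congrArg Prod.snd hxy
          rw [← Fin.cons_self_tail x, ← Fin.cons_self_tail y, h1, h2]
      simpa [Finset.card_product] using this
    have hA1card' : A1.card ≤ g.totalDegree * S.card ^ n := by
      rcases Nat.eq_zero_or_pos n with hn | hn
      · subst hn
        have : Zn = ∅ := by
          ext t
          simp [hZn, sz_zero g hg0 t]
        rw [this] at hA1card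
        simp only [Finset.card_empty, Nat.mul_zero] at hA1card
        calc A1.card ≤ 0 := hA1card
          _ ≤ _ := Nat.zero_le _
      · calc A1.card ≤ S.card * Zn.card := hA1card
          _ ≤ S.card * (g.totalDegree * S.card ^ (n-1)) := Nat.mul_le_mul_left _ hZncard
          _ = g.totalDegree * (S.card * S.card ^ (n-1)) := by ring
          _ = g.totalDegree * S.card ^ n := by
              rw [← pow_succ']
              congr 2
              omega
    -- A2 bound
    have hA2card : A2.card ≤ d * S.card ^ n := by
      have hsub : A2 ⊆ (Fintype.piFinset fun _ : Fin n => S).biUnion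
          (fun t => ((qe.map (eval t)).roots.toFinset).image
            (fun a => (Fin.cons a t : Fin (n+1) → F))) := by
        intro x hx
        simp only [hA2, hA, Finset.mem_filter, Fintype.mem_piFinset] at hx
        obtain ⟨⟨hxS, hxz⟩, hgt⟩ := hx
        rw [Finset.mem_biUnion]
        refine ⟨Fin.tail x, Fintype.mem_piFinset.mpr (fun i => hxS i.succ), ?_⟩
        rw [Finset.mem_image]
        refine ⟨x 0, ?_, Fin.cons_self_tail x⟩
        have hgc : g = qe.coeff d := Polynomial.coeff_natDegree.symm
        have hne : qe.map (eval (Fin.tail x)) ≠ 0 := by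
          intro hmap0
          apply hgt
          have h2 : (qe.map (eval (Fin.tail x))).coeff d = 0 := by rw [hmap0]; simp
          rw [Polynomial.coeff_map] at h2
          rw [hgc]
          exact h2
        rw [Multiset.mem_toFinset, Polynomial.mem_roots hne]
        show Polynomial.eval (x 0) (Polynomial.map (eval (Fin.tail x)) qe) = 0
        rw [← heval x]
        exact hxz
      exact le_trans (Finset.card_le_card hsub) (roots_biUnion_card S n qe d le_rfl)
    calc A.card = A1.card + A2.card := hsplit
      _ ≤ g.totalDegree * S.card ^ n + d * S.card ^ n := Nat.add_le_add hA1card' hA2card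
      _ = (g.totalDegree + d) * S.card ^ n := (Nat.add_mul _ _ _).symm
      _ ≤ p.totalDegree * S.card ^ n := Nat.mul_le_mul_right _ hdeg
      _ = p.totalDegree * S.card ^ ((n+1) - 1) := by simp


/-- The toric code of the simplex `P_{ℓ₁,...,ℓ_m} = conv{0, ℓ₁e₁, ..., ℓ_m e_m}` over
`F_q` (evaluating the monomials `x^e` with `e ∈ ℕ^m`, `∑ i, e i / ℓ i ≤ 1`) has minimum
distance exactly `(q-1)^m - L(q-1)^{m-1}`, where `L = max_i ℓ i`. -/
theorem skew_simplex_toric_code_min_dist {F : Type*} [Field F] [Fintype F]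
    (q m L : ℕ) (hm : 1 ≤ m) (hq : Fintype.card F = q)
    (l : Fin m → ℕ) (hl1 : ∀ i, 1 ≤ l i)
    (hmax : ∀ i, l i ≤ L) (hattained : ∃ i, l i = L) (hL : L < q - 1)
    (C : Set ((Fin m → Fˣ) → F))
    (hC : C = {w | ∃ c : {e : ∀ i, Fin (l i + 1) //
        ∑ i, ((e i : ℕ) : ℚ) / ((l i : ℕ) : ℚ) ≤ 1} → F,
      w = fun p => ∑ e, c e * ∏ i, (p i : F) ^ (((e : ∀ i, Fin (l i + 1)) i : ℕ))}) :
    (∀ w ∈ C, w ≠ 0 → (q - 1) ^ m - L * (q - 1) ^ (m - 1) ≤ {p | w p ≠ 0}.ncard) ∧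
    (∃ w ∈ C, w ≠ 0 ∧ {p | w p ≠ 0}.ncard = (q - 1) ^ m - L * (q - 1) ^ (m - 1)) := by
  classical
  obtain ⟨i0, hi0⟩ := hattained
  have hL1 : 1 ≤ L := le_trans (hl1 i0) (le_of_eq hi0)
  have hcardU : Fintype.card Fˣ = q - 1 := by
    rw [Fintype.card_units, hq]
  have hcardpi : Fintype.card (Fin m → Fˣ) = (q - 1) ^ m := by
    simp [Fintype.card_pi, hcardU]
  have hsumL : ∀ e : {e : ∀ i, Fin (l i + 1) //
      ∑ i, ((e i : ℕ) : ℚ) / ((l i : ℕ) : ℚ) ≤ 1}, ∑ i, ((e : ∀ i, Fin (l i + 1)) i : ℕ) ≤ L := by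
    rintro ⟨e, he⟩
    have hLQ : (0 : ℚ) < (L : ℚ) := by exact_mod_cast hL1
    have h1 : (∑ i, ((e i : ℕ) : ℚ)) / (L : ℚ) ≤ 1 := by
      rw [Finset.sum_div]
      refine le_trans (Finset.sum_le_sum ?_) he
      intro i _
      apply div_le_div_of_nonneg_left (by positivity) (by exact_mod_cast hl1 i)
      exact_mod_cast hmax i
    have h2 : (∑ i, ((e i : ℕ) : ℚ)) ≤ (L : ℚ) := by
      rwa [div_le_one hLQ] at h1
    exact_mod_cast (by push_cast at h2 ⊢; exact h2 : ((∑ i, ((e i : ℕ) : ℕ) : ℕ) : ℚ) ≤ (L : ℚ))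
  constructor
  · -- lower bound
    intro w hw hw0
    rw [hC] at hw
    obtain ⟨c, hwc⟩ := hw
    set P : MvPolynomial (Fin m) F :=
      ∑ e : {e : ∀ i, Fin (l i + 1) // ∑ i, ((e i : ℕ) : ℚ) / ((l i : ℕ) : ℚ) ≤ 1},
        MvPolynomial.C (c e) * ∏ i, (MvPolynomial.X i) ^ (((e : ∀ i, Fin (l i + 1)) i : ℕ)) with hP
    have hevalP : ∀ x : Fin m → F, MvPolynomial.eval x P =
        ∑ e, c e * ∏ i, (x i) ^ (((e : ∀ i, Fin (l i + 1)) i : ℕ)) := by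
      intro x
      rw [hP]
      simp [MvPolynomial.eval_prod]
    have hwp : ∀ p : Fin m → Fˣ, w p = MvPolynomial.eval (fun i => ((p i : F))) P := by
      intro p
      rw [hwc, hevalP]
    have hP0 : P ≠ 0 := by
      intro h
      apply hw0
      funext p
      rw [hwp, h]
      simp
    have hPdeg : P.totalDegree ≤ L := by
      rw [hP]
      apply MvPolynomial.totalDegree_finsetSum_le
      intro e _
      calc (MvPolynomial.C (c e) * ∏ i, (MvPolynomial.X i : MvPolynomial (Fin m) F)
              ^ (((e : ∀ i, Fin (l i + 1)) i : ℕ))).totalDegree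
          ≤ (MvPolynomial.C (c e)).totalDegree
            + (∏ i, (MvPolynomial.X i : MvPolynomial (Fin m) F)
              ^ (((e : ∀ i, Fin (l i + 1)) i : ℕ))).totalDegree := MvPolynomial.totalDegree_mul _ _
        _ = (∏ i, (MvPolynomial.X i : MvPolynomial (Fin m) F)
              ^ (((e : ∀ i, Fin (l i + 1)) i : ℕ))).totalDegree := by
              rw [MvPolynomial.totalDegree_C, Nat.zero_add]
        _ ≤ ∑ i, ((MvPolynomial.X i : MvPolynomial (Fin m) F)
              ^ (((e : ∀ i, Fin (l i + 1)) i : ℕ))).totalDegree :=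
            MvPolynomial.totalDegree_finset_prod _ _
        _ ≤ ∑ i, (((e : ∀ i, Fin (l i + 1)) i : ℕ)) := by
            apply Finset.sum_le_sum
            intro i _
            rw [MvPolynomial.totalDegree_X_pow]
        _ ≤ L := hsumL e
    -- counting
    set S : Finset F := Finset.univ.erase 0 with hS
    have hScard : S.card = q - 1 := by
      rw [hS, Finset.card_erase_of_mem (Finset.mem_univ 0), Finset.card_univ, hq]
    set Z := Finset.univ.filter (fun p : Fin m → Fˣ => w p = 0) with hZ
    set N := Finset.univ.filter (fun p : Fin m → Fˣ => ¬ w p = 0) with hN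
    have hZN : Z.card + N.card = (q - 1) ^ m := by
      rw [hZ, hN, Finset.card_filter_add_card_filter_not, Finset.card_univ, hcardpi]
    have hZcard : Z.card ≤ L * (q - 1) ^ (m - 1) := by
      have hinj : Z.card ≤ ((Fintype.piFinset fun _ : Fin m => S).filter
          fun x => MvPolynomial.eval x P = 0).card := by
        apply Finset.card_le_card_of_injOn (fun p i => ((p i : F)))
        · intro p hp
          rw [hZ, Finset.mem_coe, Finset.mem_filter] at hp
          rw [Finset.mem_coe, Finset.mem_filter, Fintype.mem_piFinset]
          constructor
          · intro i
            rw [hS]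
            exact Finset.mem_erase.mpr ⟨Units.ne_zero _, Finset.mem_univ _⟩
          · rw [← hwp]; exact hp.2
        · intro p _ p' _ hpp'
          funext i
          exact Units.ext (congrFun hpp' i)
      calc Z.card ≤ _ := hinj
        _ ≤ P.totalDegree * S.card ^ (m - 1) := sz S m P hP0
        _ ≤ L * (q - 1) ^ (m - 1) := by
            rw [hScard]
            exact Nat.mul_le_mul_right _ hPdeg
    have hncard : {p | w p ≠ 0}.ncard = N.card := by
      rw [Set.ncard_eq_toFinset_card', Set.toFinset_setOf]
    rw [hncard]
    omega
  · -- upper bound: explicit codeword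
    obtain ⟨T, -, hTcard⟩ := Finset.exists_subset_card_eq
      (s := (Finset.univ : Finset Fˣ)) (n := L)
      (by rw [Finset.card_univ, hcardU]; omega)
    set Q : Polynomial F := ∏ a ∈ T, (Polynomial.X - Polynomial.C (a : F)) with hQ
    have hQdeg : Q.natDegree = L := by
      rw [hQ, Polynomial.natDegree_prod_of_monic _ _
        (fun a _ => Polynomial.monic_X_sub_C _)]
      simp [Polynomial.natDegree_X_sub_C, hTcard]
    have hQeval : ∀ x : F, Q.eval x = ∏ a ∈ T, (x - (a : F)) := by
      intro x
      rw [hQ, Polynomial.eval_prod]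
      simp
    have hQroot : ∀ b : Fˣ, (Q.eval (b : F) = 0 ↔ b ∈ T) := by
      intro b
      rw [hQeval, Finset.prod_eq_zero_iff]
      constructor
      · rintro ⟨a, haT, hab⟩
        have : (b : F) = (a : F) := by linear_combination hab
        rwa [show b = a from Units.ext this]
      · intro hb
        exact ⟨b, hb, by ring⟩
    set cond : {e : ∀ i, Fin (l i + 1) //
        ∑ i, ((e i : ℕ) : ℚ) / ((l i : ℕ) : ℚ) ≤ 1} → Prop :=
      fun e => ∀ j, j ≠ i0 → ((e : ∀ i, Fin (l i + 1)) j : ℕ) = 0 with hcond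
    set c : {e : ∀ i, Fin (l i + 1) //
        ∑ i, ((e i : ℕ) : ℚ) / ((l i : ℕ) : ℚ) ≤ 1} → F :=
      fun e => if cond e then Q.coeff ((e : ∀ i, Fin (l i + 1)) i0 : ℕ) else 0 with hc
    refine ⟨fun p => ∑ e, c e * ∏ i, (p i : F) ^ (((e : ∀ i, Fin (l i + 1)) i : ℕ)),
      by rw [hC]; exact ⟨c, rfl⟩, ?_⟩
    -- the explicit codeword evaluates to Q at coordinate i0
    have hli0 : l i0 = L := hi0
    have hε : ∀ k j, (if j = i0 then min k (l j) else 0) < l j + 1 := by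
      intro k j; split <;> omega
    set ε : ℕ → ∀ j, Fin (l j + 1) := fun k j => ⟨if j = i0 then min k (l j) else 0, hε k j⟩
      with hεdef
    have hεmem : ∀ k, ∑ j, ((ε k j : ℕ) : ℚ) / ((l j : ℕ) : ℚ) ≤ 1 := by
      intro k
      have hv : ((ε k i0 : ℕ)) = min k (l i0) := by simp [hεdef]
      have : ∑ j, ((ε k j : ℕ) : ℚ) / ((l j : ℕ) : ℚ)
          = ((ε k i0 : ℕ) : ℚ) / ((l i0 : ℕ) : ℚ) := by
        apply Finset.sum_eq_single i0
        · intro j _ hj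
          have : ((ε k j : ℕ)) = 0 := by simp [hεdef, if_neg hj]
          rw [this]
          simp
        · intro h; exact absurd (Finset.mem_univ i0) h
      rw [this, hv]
      rw [div_le_one (by exact_mod_cast hl1 i0)]
      exact_mod_cast Nat.min_le_right k (l i0)
    have hw : ∀ p : Fin m → Fˣ,
        (∑ e, c e * ∏ i, ((p i : F)) ^ (((e : ∀ i, Fin (l i + 1)) i : ℕ)))
          = Q.eval ((p i0 : F)) := by
      intro p
      have h1 : (∑ e, c e * ∏ i, ((p i : F)) ^ (((e : ∀ i, Fin (l i + 1)) i : ℕ)))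
          = ∑ e ∈ Finset.univ.filter cond,
              Q.coeff (((e : ∀ i, Fin (l i + 1)) i0 : ℕ)) * ((p i0 : F)) ^ (((e : ∀ i, Fin (l i + 1)) i0 : ℕ)) := by
        rw [Finset.sum_filter]
        apply Finset.sum_congr rfl
        intro e _
        by_cases h : cond e
        · rw [if_pos h, hc]
          simp only [if_pos h]
          congr 1
          apply Finset.prod_eq_single i0
          · intro j _ hj
            rw [h j hj, pow_zero]
          · intro h'; exact absurd (Finset.mem_univ i0) h'
        · rw [if_neg h, hc]
          simp only [if_neg h, zero_mul]
      rw [h1]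
      rw [Polynomial.eval_eq_sum_range, hQdeg]
      refine Finset.sum_nbij' (fun e => (((e : ∀ i, Fin (l i + 1)) i0 : ℕ)))
        (fun k => Subtype.mk (ε k) (hεmem k)) ?_ ?_ ?_ ?_ ?_
      · intro e _
        rw [Finset.mem_range]
        exact Nat.lt_of_lt_of_le ((e : ∀ i, Fin (l i + 1)) i0).isLt (by rw [hli0])
      · intro k _
        rw [Finset.mem_filter]
        refine ⟨Finset.mem_univ _, ?_⟩
        intro j hj
        simp [hεdef, if_neg hj]
      · intro e he
        rw [Finset.mem_filter] at he
        apply Subtype.ext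
        funext j
        apply Fin.ext
        by_cases hj : j = i0
        · subst hj
          have hle : ((e : ∀ i, Fin (l i + 1)) j : ℕ) ≤ l j := Nat.lt_succ_iff.mp ((e : ∀ i, Fin (l i + 1)) j).isLt
          simp [hεdef, Nat.min_eq_left hle]
        · have := he.2 j hj
          simp [hεdef, if_neg hj, this]
      · intro k hk
        rw [Finset.mem_range] at hk
        have hkL : k ≤ l i0 := by omega
        simp [hεdef, Nat.min_eq_left hkL]
      · intro e _
        rfl
    obtain ⟨b, hb⟩ : ∃ b : Fˣ, b ∉ T := by
      by_contra h
      push_neg at h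
      have : (Finset.univ : Finset Fˣ).card ≤ T.card :=
        Finset.card_le_card (fun x _ => h x)
      rw [Finset.card_univ, hcardU, hTcard] at this
      omega
    constructor
    · intro h0
      have := congrFun h0 (fun _ => b)
      rw [hw (fun _ => b)] at this
      exact hb ((hQroot b).mp this)
    · have hset : {p : Fin m → Fˣ | (∑ e, c e * ∏ i, ((p i : F)) ^ (((e : ∀ i, Fin (l i + 1)) i : ℕ))) ≠ 0}
          = {p : Fin m → Fˣ | p i0 ∉ T} := by
        ext p
        simp only [Set.mem_setOf_eq, hw p]
        constructor
        · intro h hmem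
          exact h ((hQroot (p i0)).mpr hmem)
        · intro h hz
          exact h ((hQroot (p i0)).mp hz)
      rw [hset, Set.ncard_eq_toFinset_card', Set.toFinset_setOf]
      have hfil : (Finset.univ.filter fun p : Fin m → Fˣ => p i0 ∉ T)
          = Fintype.piFinset (fun j => if j = i0 then Tᶜ else Finset.univ) := by
        ext p
        simp only [Finset.mem_filter, Finset.mem_univ, true_and, Fintype.mem_piFinset]
        constructor
        · intro h j
          by_cases hj : j = i0
          · subst hj; rw [if_pos rfl]; exact Finset.mem_compl.mpr h
          · rw [if_neg hj]; exact Finset.mem_univ _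
        · intro h
          have := h i0
          rwa [if_pos rfl, Finset.mem_compl] at this
      rw [hfil, Fintype.card_piFinset]
      rw [← Finset.mul_prod_erase _ _ (Finset.mem_univ i0), if_pos rfl]
      have h2 : ∏ j ∈ Finset.univ.erase i0,
          (if j = i0 then Tᶜ else (Finset.univ : Finset Fˣ)).card = (q - 1) ^ (m - 1) := by
        rw [Finset.prod_congr rfl (fun j hj => by
          rw [if_neg (Finset.mem_erase.mp hj).1, Finset.card_univ, hcardU])]
        rw [Finset.prod_const, Finset.card_erase_of_mem (Finset.mem_univ i0),
          Finset.card_univ, Fintype.card_fin]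
      rw [h2, Finset.card_compl, hcardU, hTcard]
      have h3 : (q - 1) ^ m = (q - 1) * (q - 1) ^ (m - 1) := by
        conv_lhs => rw [show m = (m - 1) + 1 by omega]
        rw [pow_succ]
        ring
      rw [h3, ← Nat.sub_mul, Nat.mul_comm]
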